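/- Let V be a nonzero proper linear subspace of span{e₀, e₁} and let g ∈ H²_V be outer. Then the set {p·g : p an analytic polynomial whose coefficient of e₁ is zero} is dense in H²_V; that is, multiples of g by (boundary values of) elements of the Neil algebra are dense in H²_V. -/

import Mathlib

noncomputable section

open MeasureTheory Complex
open scoped ComplexConjugate

namespace NeilToeplitz

instance fact_two_pi_pos : Fact (0 < 2 * Real.pi) := ⟨by positivity⟩

/-- The circle group `ℝ / 2πℤ`. -/
abbrev 𝕋 : Type := AddCircle (2 * Real.pi)

/-- Normalized arclength (Haar probability) measure on the circle. -/
abbrev μ : Measure 𝕋 := AddCircle.haarAddCircle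

/-- The Lebesgue space `L²(𝕋)`. -/
abbrev L2 : Type := Lp ℂ 2 μ

/-- The exponential `e_n(e^{it}) = e^{int}` as an element of `L²(𝕋)`. -/
def e (n : ℤ) : L2 := fourierLp 2 n

/-- The Hardy space `H²`, the closed linear span of `{e_n : n ≥ 0}` in `L²(𝕋)`. -/
def H2 : Submodule ℂ L2 :=
  (Submodule.span ℂ (Set.range fun n : ℕ => e (n : ℤ))).topologicalClosure

/-- The space `H²_V = H² ∩ V^⊥`. -/
def H2V (V : Submodule ℂ L2) : Submodule ℂ L2 := H2 ⊓ Vᗮ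

lemma isClosed_H2V (V : Submodule ℂ L2) : IsClosed ((H2V V : Set L2)) := by
  have h1 : IsClosed ((H2 : Set L2)) := Submodule.isClosed_topologicalClosure _
  have h2 : IsClosed ((Vᗮ : Set L2)) := Submodule.isClosed_orthogonal V
  simpa [H2V] using h1.inter h2

instance (V : Submodule ℂ L2) : CompleteSpace (H2V V) :=
  (isClosed_H2V V).completeSpace_coe

/-- A bounded (a.e.) measurable function times an `L²` function is in `L²`. -/
lemma memLp_bdd_mul {φ : 𝕋 → ℂ} (hφ : AEStronglyMeasurable φ μ) (C : ℝ)
    (hC : ∀ᵐ x ∂μ, ‖φ x‖ ≤ C) (g : L2) :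
    MemLp (fun x => φ x * g x) 2 μ := by
  refine MemLp.of_le_mul (c := C) (Lp.memLp g) (hφ.mul (Lp.aestronglyMeasurable g)) ?_
  filter_upwards [hC] with x hx
  rw [norm_mul]
  exact mul_le_mul_of_nonneg_right hx (norm_nonneg _)

/-- Multiplication of `g ∈ L²` by a real-valued bounded measurable symbol `φ`. -/
def phiMul (φ : 𝕋 → ℝ) (hφ : Measurable φ) {C : ℝ} (hC : ∀ x, |φ x| ≤ C) (g : L2) : L2 :=
  (memLp_bdd_mul ((Complex.measurable_ofReal.comp hφ).aestronglyMeasurable) C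
    (Filter.Eventually.of_forall fun x => by simpa using hC x) g).toLp _

/-- The Toeplitz operator `T_φ^V : H²_V → H²_V`, `g ↦ P_V (φ · g)`. -/
def toeplitz (φ : 𝕋 → ℝ) (hφ : Measurable φ) {C : ℝ} (hC : ∀ x, |φ x| ≤ C)
    (V : Submodule ℂ L2) (g : H2V V) : H2V V :=
  (H2V V).orthogonalProjectionOnto (phiMul φ hφ hC (g : L2))

/-- Multiplication of `g ∈ L²` by the exponential `e_n`. -/
def mulFourier (n : ℤ) (g : L2) : L2 :=
  (memLp_bdd_mul (map_continuous (fourier n)).aestronglyMeasurable 1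
    (Filter.Eventually.of_forall fun x => le_of_eq (Circle.norm_coe _)) g).toLp _

/-- `g` is outer: the analytic-polynomial multiples of `g` are dense in `H²`. -/
def Outer (g : L2) : Prop :=
  (Submodule.span ℂ (Set.range fun n : ℕ => mulFourier (n : ℤ) g)).topologicalClosure = H2

/-- `lam` is an eigenvalue of `φ` relative to the Neil algebra. -/
def IsEigenvalueRelNeil (φ : 𝕋 → ℝ) (hφ : Measurable φ) {C : ℝ} (hC : ∀ x, |φ x| ≤ C)
    (lam : ℝ) : Prop :=
  ∃ V : Submodule ℂ L2, V ≤ Submodule.span ℂ {e 0, e 1} ∧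
    ∃ g : H2V V, g ≠ 0 ∧ toeplitz φ hφ hC V g = (lam : ℂ) • g

end NeilToeplitz

namespace NeilToeplitz

open scoped InnerProductSpace

lemma coeFn_mulFourier (n : ℤ) (g : L2) :
    (mulFourier n g : 𝕋 → ℂ) =ᵐ[μ] fun x => fourier n x * g x :=
  MemLp.coeFn_toLp _

lemma inner_e_mulFourier (k n : ℤ) (g : L2) :
    ⟪e k, mulFourier n g⟫_ℂ = ⟪e (k - n), g⟫_ℂ := by
  rw [MeasureTheory.L2.inner_def, MeasureTheory.L2.inner_def]
  refine integral_congr_ae ?_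
  filter_upwards [coeFn_fourierLp (T := 2*Real.pi) 2 k,
    coeFn_fourierLp (T := 2*Real.pi) 2 (k - n), coeFn_mulFourier n g] with x h1 h2 h3
  simp only [e, h1, h2, h3, RCLike.inner_apply]
  rw [← fourier_neg, ← fourier_neg, mul_comm ((fourier n) x), mul_assoc, ← fourier_add]
  ring_nf

lemma inner_e_e (m n : ℤ) : ⟪e m, e n⟫_ℂ = if m = n then (1:ℂ) else 0 := by
  have := orthonormal_iff_ite.mp (orthonormal_fourier (T := 2*Real.pi)) m n
  simpa [e] using this

lemma mulFourier_zero (g : L2) : mulFourier 0 g = g := by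
  refine Lp.ext ?_
  filter_upwards [coeFn_mulFourier 0 g] with x hx
  simp [hx, fourier_zero]

lemma e_mem_H2 (n : ℕ) : e (n : ℤ) ∈ H2 :=
  Submodule.le_topologicalClosure _ (Submodule.subset_span ⟨n, rfl⟩)

lemma inner_e_eq_zero_of_mem_H2 {k : ℤ} (hk : k < 0) {g : L2} (hg : g ∈ H2) :
    ⟪e k, g⟫_ℂ = 0 := by
  have hker : H2 ≤ (innerSL ℂ (e k)).ker := by
    refine Submodule.topologicalClosure_minimal _ ?_ ?_
    · rw [Submodule.span_le]
      rintro _ ⟨n, rfl⟩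
      simp only [SetLike.mem_coe, LinearMap.mem_ker, ContinuousLinearMap.coe_coe,
        innerSL_apply_apply, inner_e_e]
      rw [if_neg (by omega)]
    · exact ContinuousLinearMap.isClosed_ker (innerSL ℂ (e k))
  simpa using hker hg

lemma outer_coeff0_ne_zero {g : L2} (hg : g ∈ H2) (hout : Outer g) :
    ⟪e 0, g⟫_ℂ ≠ 0 := by
  intro h0
  have hker : H2 ≤ (innerSL ℂ (e 0)).ker := by
    rw [← hout]
    refine Submodule.topologicalClosure_minimal _ ?_ ?_
    · rw [Submodule.span_le]
      rintro _ ⟨n, rfl⟩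
      simp only [SetLike.mem_coe, LinearMap.mem_ker, ContinuousLinearMap.coe_coe,
        innerSL_apply_apply, inner_e_mulFourier]
      rcases Nat.eq_zero_or_pos n with h | h
      · subst h; simpa using h0
      · exact inner_e_eq_zero_of_mem_H2 (by omega) hg
    · exact ContinuousLinearMap.isClosed_ker (innerSL ℂ (e 0))
  have := hker (e_mem_H2 0)
  simp only [LinearMap.mem_ker, ContinuousLinearMap.coe_coe, innerSL_apply_apply, inner_e_e] at this
  norm_num at this

set_option synthInstance.maxHeartbeats 1000000 in
lemma isClosed_sup_span (M : Submodule ℂ L2) (hM : IsClosed (M : Set L2)) (u : L2) :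
    IsClosed ((M ⊔ Submodule.span ℂ {u} : Submodule ℂ L2) : Set L2) := by
  haveI : IsClosed (M : Set L2) := hM
  have hq : Continuous M.mkQ := continuous_quot_mk
  have key : M ⊔ Submodule.span ℂ {u}
      = (Submodule.span ℂ ({M.mkQ u} : Set (L2 ⧸ M))).comap M.mkQ := by
    rw [← Set.image_singleton, ← Submodule.map_span, Submodule.comap_map_eq,
      Submodule.ker_mkQ, sup_comm]
  rw [key]
  exact ((Submodule.span ℂ ({M.mkQ u} : Set (L2 ⧸ M))).closed_of_finiteDimensional).preimage hq

/-- if `V` is a nonzero proper subspace of span{e₀,e₁} and `g ∈ H²_V` is outer,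
then the multiples of `g` by analytic polynomials with vanishing `e₁`-coefficient (i.e. by
elements of the Neil algebra) are dense in `H²_V`. -/

theorem neil_multiples_dense (V : Submodule ℂ L2)
    (hV : V ≤ Submodule.span ℂ {e 0, e 1}) (hVne : V ≠ ⊥)
    (hVproper : V ≠ Submodule.span ℂ {e 0, e 1})
    (g : L2) (hgV : g ∈ H2V V) (hout : Outer g) :
    (Submodule.span ℂ {x : L2 | ∃ n : ℕ, n ≠ 1 ∧ x = mulFourier (n : ℤ) g}).topologicalClosure
      = H2V V := by
  obtain ⟨hgH2, hgVp⟩ := hgV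
  set S : Set L2 := {x : L2 | ∃ n : ℕ, n ≠ 1 ∧ x = mulFourier (n : ℤ) g} with hS
  set P : Submodule ℂ L2 := Submodule.span ℂ S with hP
  set M : Submodule ℂ L2 := P.topologicalClosure with hMdef
  have hgen : ∀ n : ℕ, n ≠ 1 → mulFourier (n : ℤ) g ∈ Vᗮ := by
    intro n hn
    rw [Submodule.mem_orthogonal]
    intro w hw
    rcases Nat.eq_zero_or_pos n with h0 | hpos
    · subst h0
      rw [Nat.cast_zero, mulFourier_zero]
      exact (Submodule.mem_orthogonal V g).mp hgVp w hw
    · have hn2 : 2 ≤ n := by omega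
      obtain ⟨a, b, hab⟩ := Submodule.mem_span_pair.mp (hV hw)
      rw [← hab, inner_add_left, inner_smul_left, inner_smul_left,
        inner_e_mulFourier, inner_e_mulFourier,
        inner_e_eq_zero_of_mem_H2 (by omega) hgH2,
        inner_e_eq_zero_of_mem_H2 (by omega) hgH2]
      ring
  have hMle : M ≤ H2V V := by
    refine le_inf ?_ ?_
    · have h1 : P ≤ Submodule.span ℂ (Set.range fun n : ℕ => mulFourier (n : ℤ) g) := by
        refine Submodule.span_mono ?_
        rintro x ⟨n, hn, rfl⟩
        exact ⟨n, rfl⟩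
      calc M ≤ (Submodule.span ℂ
            (Set.range fun n : ℕ => mulFourier (n : ℤ) g)).topologicalClosure :=
          Submodule.topologicalClosure_mono h1
        _ = H2 := hout
    · refine Submodule.topologicalClosure_minimal _ ?_ (Submodule.isClosed_orthogonal V)
      rw [Submodule.span_le]
      rintro x ⟨n, hn, rfl⟩
      exact hgen n hn
  refine le_antisymm hMle ?_
  intro h hh
  obtain ⟨hhH2, hhVp⟩ := hh
  set u : L2 := mulFourier (1 : ℤ) g with hu
  have hQle : Submodule.span ℂ (Set.range fun n : ℕ => mulFourier (n : ℤ) g)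
      ≤ M ⊔ Submodule.span ℂ {u} := by
    rw [Submodule.span_le]
    rintro x ⟨n, rfl⟩
    by_cases hn : n = 1
    · subst hn
      exact Submodule.mem_sup_right (Submodule.mem_span_singleton_self u)
    · exact Submodule.mem_sup_left
        (P.le_topologicalClosure (Submodule.subset_span ⟨n, hn, rfl⟩))
  have hH2le : H2 ≤ M ⊔ Submodule.span ℂ {u} := by
    rw [← hout]
    exact Submodule.topologicalClosure_minimal _ hQle
      (isClosed_sup_span M (Submodule.isClosed_topologicalClosure P) u)
  obtain ⟨m, hm, w, hw, hmw⟩ := Submodule.mem_sup.mp (hH2le hhH2)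
  obtain ⟨c, rfl⟩ := Submodule.mem_span_singleton.mp hw
  obtain ⟨v, hvV, hvne⟩ := Submodule.exists_mem_ne_zero_of_ne_bot hVne
  obtain ⟨a, b, hab⟩ := Submodule.mem_span_pair.mp (hV hvV)
  have hg0 := outer_coeff0_ne_zero hgH2 hout
  have hb : b ≠ 0 := by
    intro hb0
    have ha : a ≠ 0 := by
      intro ha0
      apply hvne
      rw [← hab, ha0, hb0]
      simp
    have he0V : e 0 ∈ V := by
      have : e 0 = a⁻¹ • v := by
        rw [← hab, hb0, zero_smul, add_zero, smul_smul, inv_mul_cancel₀ ha, one_smul]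
      rw [this]
      exact V.smul_mem _ hvV
    exact hg0 ((Submodule.mem_orthogonal V g).mp hgVp (e 0) he0V)
  have hvu : ⟪v, u⟫_ℂ = (starRingEnd ℂ) b * ⟪e 0, g⟫_ℂ := by
    rw [← hab, inner_add_left, inner_smul_left, inner_smul_left,
      inner_e_mulFourier, inner_e_mulFourier]
    have h01 : (0:ℤ) - 1 = -1 := by norm_num
    have h11 : (1:ℤ) - 1 = 0 := by norm_num
    rw [h01, h11, inner_e_eq_zero_of_mem_H2 (by norm_num) hgH2]
    ring
  have hvh : ⟪v, h⟫_ℂ = 0 := (Submodule.mem_orthogonal V h).mp hhVp v hvV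
  have hvm : ⟪v, m⟫_ℂ = 0 := (Submodule.mem_orthogonal V m).mp (hMle hm).2 v hvV
  have hc : c = 0 := by
    rw [← hmw, inner_add_right, inner_smul_right, hvm, hvu, zero_add] at hvh
    rcases mul_eq_zero.mp hvh with h1 | h2
    · exact h1
    · exact absurd h2 (mul_ne_zero (by simpa using hb) hg0)
  rw [← hmw, hc, zero_smul, add_zero]
  exact hm

end NeilToeplitz
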